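/- arXiv:0711.0592 — 8 statements merged into one kernel-verified Lean document; each statement's English description precedes it below -/
import Mathlib

section
/- Let y : ℝ → ℝ be differentiable with |y′(t)| ≤ L_y for all t ≥ 0, let T_s > 0 and M > 0 satisfy L_y·T_s ≤ M, and assume |y(0)| ≤ 2M. Define the sequence of central numbers c : ℕ → ℝ by c(0) = 0 and c(k+1) = c(k) + M·sgn(y(k·T_s) − c(k)), where sgn(v) = 1 if v ≥ 0 and sgn(v) = −1 if v < 0. Then for every k ∈ ℕ the coder does not saturate: |y(k·T_s) − c(k)| ≤ 2M. -/
/-- Non-saturation of the first-order binary coder: if the master output `y` has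
rate bounded by `L_y`, the sampling time satisfies `L_y·T_s ≤ M`, and
`|y(0)| ≤ 2M`, then the deviation of `y(k·T_s)` from the central numbers `c(k)`
never exceeds `2M`. -/
theorem first_order_coder_no_saturation (y : ℝ → ℝ) (Ly Ts M : ℝ) (c : ℕ → ℝ)
    (hTs : 0 < Ts) (hM : 0 < M) (hLT : Ly * Ts ≤ M)
    (hy : Differentiable ℝ y)
    (hderiv : ∀ t ≥ (0 : ℝ), |deriv y t| ≤ Ly)
    (hy0 : |y 0| ≤ 2 * M)
    (hc0 : c 0 = 0)
    (hc : ∀ k : ℕ,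
      c (k + 1) = c k + M * (if 0 ≤ y (k * Ts) - c k then (1 : ℝ) else -1)) :
    ∀ k : ℕ, |y (k * Ts) - c k| ≤ 2 * M := by
  have hlip : ∀ k : ℕ, |y ((k + 1 : ℕ) * Ts) - y (k * Ts)| ≤ M := by
    intro k
    have hconv : Convex ℝ (Set.Ici (0 : ℝ)) := convex_Ici 0
    have hbd := Convex.norm_image_sub_le_of_norm_deriv_le (f := y) (s := Set.Ici (0:ℝ))
      (fun x _ => hy x)
      (fun x hx => by simpa [Real.norm_eq_abs] using hderiv x hx)
      (hs := hconv) (x := (k : ℝ) * Ts) (y := ((k + 1 : ℕ) : ℝ) * Ts)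
      (Set.mem_Ici.mpr (by positivity)) (Set.mem_Ici.mpr (by positivity))
    have h1 : ((k + 1 : ℕ) : ℝ) * Ts - (k : ℝ) * Ts = Ts := by push_cast; ring
    calc |y ((k + 1 : ℕ) * Ts) - y (k * Ts)|
        ≤ Ly * |((k + 1 : ℕ) : ℝ) * Ts - (k : ℝ) * Ts| := by
          simpa [Real.norm_eq_abs] using hbd
      _ = Ly * Ts := by rw [h1, abs_of_pos hTs]
      _ ≤ M := hLT
  intro k
  induction k with
  | zero => simpa [hc0] using hy0
  | succ k ih =>
    have step : |y (k * Ts) - c k - M * (if 0 ≤ y (k * Ts) - c k then (1 : ℝ) else -1)| ≤ M := by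
      split_ifs with h
      · rw [abs_le]; constructor <;> [nlinarith [abs_le.mp ih]; nlinarith [abs_le.mp ih]]
      · rw [abs_le]; constructor <;> [nlinarith [abs_le.mp ih]; nlinarith [abs_le.mp ih]]
    have key : y ((k + 1 : ℕ) * Ts) - c (k + 1)
        = (y ((k + 1 : ℕ) * Ts) - y (k * Ts))
          + (y (k * Ts) - c k - M * (if 0 ≤ y (k * Ts) - c k then (1 : ℝ) else -1)) := by
      rw [hc k]; ring
    calc |y ((k + 1 : ℕ) * Ts) - c (k + 1)| ≤ _ := by rw [key]; exact abs_add_le _ _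
      _ ≤ M + M := add_le_add (hlip k) step
      _ = 2 * M := by ring
end

section
/- Let y : ℝ → ℝ be differentiable with |y′(t)| ≤ L_y for all t ≥ 0, let T_s > 0 and M > 0 satisfy L_y·T_s ≤ M, and assume |y(0)| ≤ 2M. Define c : ℕ → ℝ by c(0) = 0 and c(k+1) = c(k) + M·sgn(y(k·T_s) − c(k)), and define the decoded zero-order-hold signal ȳ(t) = c(k) + M·sgn(y(k·T_s) − c(k)) for t ∈ [k·T_s, (k+1)·T_s). Then the transmission error satisfies |y(t) − ȳ(t)| ≤ M + L_y·T_s ≤ 2M for all t ≥ 0. -/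
/-- Transmission error bound for the first-order binary coder with zero-order
hold decoding: under the non-saturation conditions `L_y·T_s ≤ M`, `|y(0)| ≤ 2M`,
the decoded signal `ȳ` satisfies `|y(t) − ȳ(t)| ≤ M + L_y·T_s ≤ 2M` for all
`t ≥ 0`. -/
theorem first_order_coder_transmission_error (y : ℝ → ℝ) (Ly Ts M : ℝ)
    (c : ℕ → ℝ) (ybar : ℝ → ℝ)
    (hTs : 0 < Ts) (hM : 0 < M) (hLT : Ly * Ts ≤ M)
    (hy : Differentiable ℝ y)
    (hderiv : ∀ t ≥ (0 : ℝ), |deriv y t| ≤ Ly)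
    (hy0 : |y 0| ≤ 2 * M)
    (hc0 : c 0 = 0)
    (hc : ∀ k : ℕ,
      c (k + 1) = c k + M * (if 0 ≤ y (k * Ts) - c k then (1 : ℝ) else -1))
    (hybar : ∀ k : ℕ, ∀ t ∈ Set.Ico ((k : ℝ) * Ts) ((k + 1 : ℝ) * Ts),
      ybar t = c k + M * (if 0 ≤ y (k * Ts) - c k then (1 : ℝ) else -1)) :
    ∀ t ≥ (0 : ℝ), |y t - ybar t| ≤ M + Ly * Ts ∧ M + Ly * Ts ≤ 2 * M := by
  have hLy0 : 0 ≤ Ly := le_trans (abs_nonneg _) (hderiv 0 le_rfl)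
  -- Lipschitz on [0, ∞)
  have hlip : ∀ a ∈ Set.Ici (0:ℝ), ∀ b ∈ Set.Ici (0:ℝ), |y b - y a| ≤ Ly * |b - a| := by
    intro a ha b hb
    have := Convex.norm_image_sub_le_of_norm_deriv_le
      (f := y) (s := Set.Ici (0:ℝ)) (C := Ly)
      (fun x _ => hy x)
      (fun x hx => by simpa [Real.norm_eq_abs] using hderiv x hx) (convex_Ici 0) ha hb
    simpa [Real.norm_eq_abs] using this
  -- step bound: if |y(kTs) - c k| ≤ 2M then |y(kTs) - c (k+1)| ≤ M
  have hstep : ∀ k : ℕ, |y (k * Ts) - c k| ≤ 2 * M → |y (k * Ts) - c (k+1)| ≤ M := by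
    intro k hk
    rw [hc k]
    rcases abs_le.mp hk with ⟨h1, h2⟩
    by_cases hd : 0 ≤ y (k * Ts) - c k
    · simp only [hd, if_pos]
      rw [abs_le]; constructor <;> nlinarith
    · simp only [hd, if_neg, not_false_iff]
      rw [abs_le]; constructor <;> nlinarith
  -- sampled-error bound by induction
  have hsample : ∀ k : ℕ, |y (k * Ts) - c k| ≤ 2 * M := by
    intro k
    induction k with
    | zero => simpa [hc0] using hy0
    | succ n ih =>
      have h1 : |y ((n+1 : ℕ) * Ts) - y (n * Ts)| ≤ Ly * Ts := by
        have hn : (0:ℝ) ≤ (n:ℝ) * Ts := by positivity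
        have hn1 : (0:ℝ) ≤ ((n:ℕ)+1:ℝ) * Ts := by positivity
        have := hlip ((n:ℝ) * Ts) hn (((n:ℕ)+1:ℝ) * Ts) hn1
        have heq : |((n:ℕ)+1:ℝ) * Ts - (n:ℝ) * Ts| = Ts := by
          rw [show ((n:ℕ)+1:ℝ) * Ts - (n:ℝ) * Ts = Ts by ring, abs_of_pos hTs]
        rw [heq] at this
        simpa [Nat.cast_succ] using this
      have h2 := hstep n ih
      calc |y ((n+1 : ℕ) * Ts) - c (n+1)|
          ≤ |y ((n+1 : ℕ) * Ts) - y (n * Ts)| + |y (n * Ts) - c (n+1)| := by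
            have := abs_sub_le (y ((n+1 : ℕ) * Ts)) (y (n * Ts)) (c (n+1))
            simpa using this
        _ ≤ Ly * Ts + M := add_le_add h1 h2
        _ ≤ 2 * M := by linarith
  intro t ht
  refine ⟨?_, by linarith⟩
  set k : ℕ := ⌊t / Ts⌋₊ with hk
  have hkle : (k:ℝ) * Ts ≤ t := by
    have := Nat.floor_le (div_nonneg ht hTs.le)
    calc (k:ℝ) * Ts ≤ (t / Ts) * Ts := by nlinarith
      _ = t := div_mul_cancel₀ t hTs.ne'
  have hklt : t < ((k:ℝ) + 1) * Ts := by
    have := Nat.lt_floor_add_one (t / Ts)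
    calc t = (t / Ts) * Ts := (div_mul_cancel₀ t hTs.ne').symm
      _ < ((k:ℝ) + 1) * Ts := by nlinarith
  have hyb : ybar t = c k + M * (if 0 ≤ y (k * Ts) - c k then (1 : ℝ) else -1) :=
    hybar k t ⟨hkle, hklt⟩
  have h2 : |y (k * Ts) - c (k+1)| ≤ M := hstep k (hsample k)
  have hckk : c (k+1) = c k + M * (if 0 ≤ y (k * Ts) - c k then (1 : ℝ) else -1) := hc k
  have h1 : |y t - y (k * Ts)| ≤ Ly * Ts := by
    have hn : (0:ℝ) ≤ (k:ℝ) * Ts := by positivity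
    have := hlip ((k:ℝ) * Ts) hn t ht
    have habs : |t - (k:ℝ) * Ts| ≤ Ts := by
      rw [abs_of_nonneg (by linarith)]; nlinarith
    calc |y t - y ((k:ℝ) * Ts)| ≤ Ly * |t - (k:ℝ) * Ts| := this
      _ ≤ Ly * Ts := by nlinarith
  calc |y t - ybar t| = |y t - c (k+1)| := by rw [hyb, hckk]
    _ ≤ |y t - y (k * Ts)| + |y (k * Ts) - c (k+1)| := abs_sub_le _ _ _
    _ ≤ Ly * Ts + M := add_le_add h1 h2
    _ = M + Ly * Ts := by ring
end

section
/- Let A be a real n×n matrix, B a real n×1 matrix, C a real 1×n matrix, K ∈ ℝ, and set A_K := A − B K C. Let P be a real symmetric positive-definite n×n matrix and μ > 0 such that P A_K + A_Kᵀ P ≤ −μ P (in the sense of quadratic forms) and P B = Cᵀ. Let κ ∈ ℝ, Δ ≥ 0, and let e : ℝ → ℝⁿ be differentiable and satisfy ė(t) = A_K e(t) + B ξ(t) − B κ δ(t), where ξ, δ : ℝ → ℝ satisfy ξ(t)·(C e(t)) ≤ 0 and |δ(t)| ≤ Δ for all t. Then the Lyapunov function V(t) := e(t)ᵀ P e(t)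 satisfies the differential inequality V̇(t) ≤ −μ V(t) + 2|κ|Δ·√(Bᵀ P B)·√(V(t)) for all t. -/
open Matrix

-- Cauchy-Schwarz for PSD quadratic form
lemma cs_psd {n : ℕ} (P : Matrix (Fin n) (Fin n) ℝ) (hP : P.PosSemidef)
    (x y : Fin n → ℝ) :
    |x ⬝ᵥ P.mulVec y| ≤ Real.sqrt (x ⬝ᵥ P.mulVec x) * Real.sqrt (y ⬝ᵥ P.mulVec y) := by
  set a := x ⬝ᵥ P.mulVec x with ha
  set b := x ⬝ᵥ P.mulVec y with hb
  set c := y ⬝ᵥ P.mulVec y with hc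
  have ha0 : 0 ≤ a := hP.dotProduct_mulVec_nonneg x
  have hc0 : 0 ≤ c := hP.dotProduct_mulVec_nonneg y
  have hsym : ∀ u v : Fin n → ℝ, u ⬝ᵥ P.mulVec v = v ⬝ᵥ P.mulVec u := by
    intro u v
    simp only [dotProduct, mulVec, Finset.mul_sum]
    rw [Finset.sum_comm]
    refine Finset.sum_congr rfl fun i _ => Finset.sum_congr rfl fun j _ => ?_
    have h := hP.1.apply i j
    simp only [RCLike.star_def, starRingEnd_apply, star_trivial] at h
    rw [h]; ring
  have hq : ∀ lam : ℝ, 0 ≤ c * (lam * lam) + (2*b) * lam + a := by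
    intro lam
    have : 0 ≤ (x + lam • y) ⬝ᵥ P.mulVec (x + lam • y) := hP.dotProduct_mulVec_nonneg (x + lam • y)
    have hexp : (x + lam • y) ⬝ᵥ P.mulVec (x + lam • y)
        = c * (lam * lam) + (2*b) * lam + a := by
      simp [mulVec_add, dotProduct_add, add_dotProduct, mulVec_smul,
        dotProduct_smul, smul_dotProduct, smul_eq_mul]
      rw [hsym y x]
      ring
    linarith [hexp ▸ this]
  have hd := discrim_le_zero hq
  rw [discrim] at hd
  have hb2 : b ^ 2 ≤ a * c := by nlinarith
  calc |b| = Real.sqrt (b ^ 2) := by rw [Real.sqrt_sq_eq_abs]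
    _ ≤ Real.sqrt (a * c) := Real.sqrt_le_sqrt hb2
    _ = Real.sqrt a * Real.sqrt c := Real.sqrt_mul ha0 c

/-- Lyapunov differential inequality for the perturbed passive error system:
under the passification relations `P A_K + A_Kᵀ P ≤ −μP` (as quadratic forms)
and `PB = Cᵀ`, along trajectories of `ė = A_K e + Bξ − Bκδ` with sector
condition `ξ·(Ce) ≤ 0` and `|δ| ≤ Δ`, the function `V = eᵀPe` satisfies
`V̇ ≤ −μV + 2|κ|Δ·√(BᵀPB)·√V`. -/
theorem lyapunov_differential_inequality {n : ℕ}
    (A : Matrix (Fin n) (Fin n) ℝ) (B C : Fin n → ℝ) (K : ℝ)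
    (P : Matrix (Fin n) (Fin n) ℝ) (μ κ Δ : ℝ)
    (hP : P.PosDef) (hμ : 0 < μ) (hΔ : 0 ≤ Δ)
    (hLyap : ∀ v : Fin n → ℝ,
      v ⬝ᵥ (P * (A - K • vecMulVec B C) + (A - K • vecMulVec B C)ᵀ * P).mulVec v
        ≤ -μ * (v ⬝ᵥ P.mulVec v))
    (hPB : P.mulVec B = C)
    (e : ℝ → Fin n → ℝ) (ξ δ : ℝ → ℝ)
    (hde : ∀ t : ℝ, HasDerivAt e
      ((A - K • vecMulVec B C).mulVec (e t) + ξ t • B - (κ * δ t) • B) t)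
    (hsec : ∀ t : ℝ, ξ t * (C ⬝ᵥ e t) ≤ 0)
    (hδ : ∀ t : ℝ, |δ t| ≤ Δ) :
    ∀ t : ℝ, deriv (fun s => e s ⬝ᵥ P.mulVec (e s)) t
      ≤ -μ * (e t ⬝ᵥ P.mulVec (e t))
        + 2 * |κ| * Δ * Real.sqrt (B ⬝ᵥ P.mulVec B)
          * Real.sqrt (e t ⬝ᵥ P.mulVec (e t)) := by
  intro t
  set AK := A - K • vecMulVec B C with hAK
  set e' : Fin n → ℝ := AK.mulVec (e t) + ξ t • B - (κ * δ t) • B with he'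
  have hcoord : ∀ i, HasDerivAt (fun s => e s i) (e' i) t := hasDerivAt_pi.mp (hde t)
  have hsym : ∀ u v : Fin n → ℝ, u ⬝ᵥ P.mulVec v = v ⬝ᵥ P.mulVec u := by
    intro u v
    simp only [dotProduct, mulVec, Finset.mul_sum]
    rw [Finset.sum_comm]
    refine Finset.sum_congr rfl fun i _ => Finset.sum_congr rfl fun j _ => ?_
    have h := hP.1.apply i j
    simp only [RCLike.star_def, starRingEnd_apply, star_trivial] at h
    rw [h]; ring
  -- derivative of V
  have hV : HasDerivAt (fun s => e s ⬝ᵥ P.mulVec (e s))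
      (e' ⬝ᵥ P.mulVec (e t) + e t ⬝ᵥ P.mulVec e') t := by
    have heq : ∀ s : ℝ, e s ⬝ᵥ P.mulVec (e s) = ∑ i, ∑ j, e s i * (P i j * e s j) := by
      intro s; simp [dotProduct, mulVec, Finset.mul_sum]
    have h2 : (e' ⬝ᵥ P.mulVec (e t) + e t ⬝ᵥ P.mulVec e')
        = ∑ i, ∑ j, (e' i * (P i j * e t j) + e t i * (P i j * e' j)) := by
      simp [dotProduct, mulVec, Finset.mul_sum, Finset.sum_add_distrib]
    rw [funext heq, h2]
    apply HasDerivAt.fun_sum; intro i _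
    apply HasDerivAt.fun_sum; intro j _
    exact (hcoord i).mul ((hcoord j).const_mul (P i j))
  rw [hV.deriv]
  -- algebraic decomposition
  have hBPe : B ⬝ᵥ P.mulVec (e t) = C ⬝ᵥ e t := by
    rw [hsym, hPB, dotProduct_comm]
  have hePB : e t ⬝ᵥ P.mulVec B = C ⬝ᵥ e t := by
    rw [hPB, dotProduct_comm]
  have hquad : AK.mulVec (e t) ⬝ᵥ P.mulVec (e t) + e t ⬝ᵥ P.mulVec (AK.mulVec (e t))
      = e t ⬝ᵥ (P * AK + AKᵀ * P).mulVec (e t) := by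
    have h2 : e t ⬝ᵥ AKᵀ.mulVec (P.mulVec (e t)) = AK.mulVec (e t) ⬝ᵥ P.mulVec (e t) := by
      rw [dotProduct_mulVec, vecMul_transpose]
    rw [add_mulVec, dotProduct_add, ← mulVec_mulVec, ← mulVec_mulVec, h2]
    ring
  have hsplit : e' ⬝ᵥ P.mulVec (e t) + e t ⬝ᵥ P.mulVec e'
      = e t ⬝ᵥ (P * AK + AKᵀ * P).mulVec (e t)
        + 2 * (ξ t * (C ⬝ᵥ e t)) - 2 * (κ * δ t) * (C ⬝ᵥ e t) := by
    rw [he']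
    simp only [add_dotProduct, sub_dotProduct, smul_dotProduct, dotProduct_add,
      dotProduct_sub, dotProduct_smul, mulVec_add, mulVec_sub, mulVec_smul, smul_eq_mul]
    rw [hBPe, hePB, ← hquad]
    ring
  rw [hsplit]
  have h1 := hLyap (e t)
  have h2 := hsec t
  -- bound the cross term
  have hcs := cs_psd P hP.posSemidef B (e t)
  rw [hBPe] at hcs
  have hcross : -(2 * (κ * δ t) * (C ⬝ᵥ e t))
      ≤ 2 * |κ| * Δ * Real.sqrt (B ⬝ᵥ P.mulVec B) * Real.sqrt (e t ⬝ᵥ P.mulVec (e t)) := by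
    have h3 : |2 * (κ * δ t) * (C ⬝ᵥ e t)| ≤ 2 * |κ| * Δ * |C ⬝ᵥ e t| := by
      rw [abs_mul, abs_mul, abs_mul, abs_two]
      have hk := mul_le_mul_of_nonneg_left (hδ t) (abs_nonneg κ)
      have := mul_le_mul_of_nonneg_right hk (abs_nonneg (C ⬝ᵥ e t))
      nlinarith
    have h4 : 2 * |κ| * Δ * |C ⬝ᵥ e t|
        ≤ 2 * |κ| * Δ * (Real.sqrt (B ⬝ᵥ P.mulVec B) * Real.sqrt (e t ⬝ᵥ P.mulVec (e t))) := by
      apply mul_le_mul_of_nonneg_left hcs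
      positivity
    calc -(2 * (κ * δ t) * (C ⬝ᵥ e t)) ≤ |2 * (κ * δ t) * (C ⬝ᵥ e t)| := neg_le_abs _
      _ ≤ 2 * |κ| * Δ * |C ⬝ᵥ e t| := h3
      _ ≤ _ := by linarith [h4]
  linarith
end

section
/- Let V : [0, ∞) → [0, ∞) be differentiable, and let μ > 0, ν ≥ 0 be such that V̇(t) ≤ −μ V(t) + ν·√(V(t)) for all t ≥ 0. Then limsup_{t→∞} V(t) ≤ (ν/μ)². -/
open Filter

/-- Comparison principle: if `V ≥ 0` is differentiable on `[0, ∞)` and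
`V̇ ≤ −μV + ν√V` there with `μ > 0`, `ν ≥ 0`, then
`limsup_{t→∞} V(t) ≤ (ν/μ)²`. -/
theorem limsup_le_of_riccati_comparison (V : ℝ → ℝ) (μ ν : ℝ)
    (hμ : 0 < μ) (hν : 0 ≤ ν)
    (hVnonneg : ∀ t ≥ (0 : ℝ), 0 ≤ V t)
    (hVdiff : ∀ t ≥ (0 : ℝ), DifferentiableAt ℝ V t)
    (hVineq : ∀ t ≥ (0 : ℝ), deriv V t ≤ -μ * V t + ν * Real.sqrt (V t)) :
    limsup V atTop ≤ (ν / μ) ^ 2 := by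
  -- It suffices to show limsup V ≤ b for every b > (ν/μ)^2
  have hcobdd : IsCoboundedUnder (· ≤ ·) atTop V := by
    refine Filter.IsBoundedUnder.isCoboundedUnder_le ?_
    apply Filter.isBoundedUnder_of_eventually_ge (a := (0 : ℝ))
    filter_upwards [eventually_ge_atTop (0 : ℝ)] with t ht
    exact hVnonneg t ht
  refine le_of_forall_gt_imp_ge_of_dense ?_
  intro b hb
  set sb := Real.sqrt b with hsb
  have hb0 : (0 : ℝ) ≤ b := le_trans (sq_nonneg _) hb.le
  have hsbgt : ν / μ < sb := by
    have := Real.sqrt_lt_sqrt (sq_nonneg (ν / μ)) hb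
    rwa [Real.sqrt_sq (div_nonneg hν hμ.le)] at this
  have hsb0 : 0 < sb ∨ 0 ≤ sb := Or.inr (Real.sqrt_nonneg b)
  have hsbnn : 0 ≤ sb := Real.sqrt_nonneg b
  have hsbsq : sb * sb = b := Real.mul_self_sqrt hb0
  have hνμsb : ν < μ * sb := by
    have := (div_lt_iff₀ hμ).mp hsbgt
    linarith [this]
  set k := sb * (μ * sb - ν) with hk
  have hkpos : 0 < k := by
    have h1 : 0 < μ * sb - ν := by linarith
    have h2 : 0 < sb := lt_of_le_of_lt (div_nonneg hν hμ.le) hsbgt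
    exact mul_pos h2 h1
  -- Key estimate: if V t ≥ b then deriv V t ≤ -k
  have key : ∀ t ≥ (0 : ℝ), b ≤ V t → deriv V t ≤ -k := by
    intro t ht hVt
    set s := Real.sqrt (V t) with hs
    have hsnn : 0 ≤ s := Real.sqrt_nonneg _
    have hss : s * s = V t := Real.mul_self_sqrt (hVnonneg t ht)
    have hsge : sb ≤ s := Real.sqrt_le_sqrt hVt
    have h1 : deriv V t ≤ -μ * (s * s) + ν * s := by
      rw [hss]; exact hVineq t ht
    have h2 : -μ * (s * s) + ν * s ≤ -k := by
      rw [hk]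
      nlinarith [mul_nonneg (sub_nonneg.mpr hsge) (by nlinarith : (0:ℝ) ≤ μ * (s + sb) - ν)]
    linarith
  -- continuity of V on [0, ∞)
  have hcont : ∀ a c : ℝ, 0 ≤ a → ContinuousOn V (Set.Icc a c) := by
    intro a c ha
    intro x hx
    exact ((hVdiff x (le_trans ha hx.1)).continuousAt).continuousWithinAt
  -- Step 1: V eventually reaches ≤ b
  have step1 : ∃ t₀ : ℝ, 0 ≤ t₀ ∧ V t₀ ≤ b := by
    by_contra h
    push_neg at h
    -- V + k·t is antitone on [0, T]
    set T := (V 0 + 1) / k with hT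
    have hT0 : 0 ≤ T := div_nonneg (by linarith [hVnonneg 0 le_rfl]) hkpos.le
    have hanti : AntitoneOn (fun t => V t + k * t) (Set.Icc 0 T) := by
      apply antitoneOn_of_deriv_nonpos (convex_Icc 0 T)
      · exact ((hcont 0 T le_rfl).add (continuous_const.mul continuous_id).continuousOn)
      · intro x hx
        rw [interior_Icc] at hx
        exact ((hVdiff x hx.1.le).add ((differentiable_id.const_mul k) x)).differentiableWithinAt
      · intro x hx
        rw [interior_Icc] at hx
        have hx0 : (0:ℝ) ≤ x := hx.1.le
        have hd : HasDerivAt (fun t => V t + k * t) (deriv V x + k) x := by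
          exact (((hVdiff x hx0).hasDerivAt).add ((hasDerivAt_id x).const_mul k)).congr_deriv (by simp)
        rw [hd.deriv]
        have := key x hx0 (h x hx0).le
        linarith
    have := hanti (Set.left_mem_Icc.mpr hT0) (Set.right_mem_Icc.mpr hT0) hT0
    simp only [mul_zero, add_zero] at this
    have hVT : 0 ≤ V T := hVnonneg T hT0
    have hkT : k * T = V 0 + 1 := by
      rw [hT]; field_simp
    rw [hkT] at this
    linarith
  obtain ⟨t₀, ht₀, hVt₀⟩ := step1
  -- Step 2: invariance — V t ≤ b for all t ≥ t₀
  have step2 : ∀ t ≥ t₀, V t ≤ b := by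
    intro t ht
    have H := image_le_of_deriv_right_lt_deriv_boundary (f := V) (f' := deriv V)
      (a := t₀) (b := t) (B := fun _ => b) (B' := fun _ => 0)
      (hcont t₀ t ht₀)
      (fun x hx => ((hVdiff x (le_trans ht₀ hx.1)).hasDerivAt).hasDerivWithinAt)
      hVt₀ (fun x => hasDerivAt_const x b)
      (fun x hx hVx => by
        have h2 := key x (le_trans ht₀ hx.1) (le_of_eq hVx.symm)
        show deriv V x < 0
        linarith)
    exact H (Set.right_mem_Icc.mpr ht)
  -- conclude
  apply limsup_le_of_le hcobdd
  filter_upwards [eventually_ge_atTop t₀] with t ht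
  exact step2 t ht
end

section
/- Let A be a real n×n matrix, B a real n×1 matrix, C a real 1×n matrix, and φ : ℝ → ℝ Lipschitz continuous with constant L ≥ 0. Suppose there exist a real symmetric positive-definite n×n matrix P, μ > 0, and K ∈ ℝ such that P(A − BKC) + (A − BKC)ᵀP ≤ −μP (as quadratic forms) and PB = Cᵀ. Let ȳ₁ : ℝ → ℝ and Δ ≥ 0 satisfy |C x(t) − ȳ₁(t)| ≤ Δ for all t ≥ 0, where x : ℝ → ℝⁿ solves the master system ẋ = A x + B φ(C x), and let z : ℝ → ℝⁿ solve the slave system ż = A z + B φ(C z) + B u with controller u(t) = −(K + L)·(C z(t) − ȳ₁(t)). Then the limit synchronization error satisfies limsup_{t→∞} ‖z(t) − x(t)‖ ≤ 2(|K| + L)·Δ·√(Bᵀ P B) / (μ·√(λ_min(P))), where λ_min(P) is the smallest eigenvalue of P and ‖·‖ is the Euclidean norm. In particular, the upper bound on the limit synchronization error is proportional to the upper bound Δ on the transmission error. -/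
open Matrix Filter

lemma Pdot_symm {n : ℕ} {P : Matrix (Fin n) (Fin n) ℝ} (hP : P.IsHermitian)
    (u v : Fin n → ℝ) : u ⬝ᵥ P.mulVec v = v ⬝ᵥ P.mulVec u := by
  have hPt : Pᵀ = P := by
    have := hP.eq
    rwa [conjTranspose_eq_transpose_of_trivial] at this
  rw [dotProduct_mulVec, ← mulVec_transpose, hPt, dotProduct_comm]

lemma P_cauchy_schwarz {n : ℕ} {P : Matrix (Fin n) (Fin n) ℝ} (hP : P.PosSemidef)
    (u v : Fin n → ℝ) :
    (u ⬝ᵥ P.mulVec v) ^ 2 ≤ (u ⬝ᵥ P.mulVec u) * (v ⬝ᵥ P.mulVec v) := by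
  have key : ∀ t : ℝ, 0 ≤ (v ⬝ᵥ P.mulVec v) * (t * t) + (2 * (u ⬝ᵥ P.mulVec v)) * t
      + u ⬝ᵥ P.mulVec u := by
    intro t
    have h0 := hP.dotProduct_mulVec_nonneg (u + t • v)
    have hsym := Pdot_symm hP.1 v u
    simp only [mulVec_add, mulVec_smul, add_dotProduct, dotProduct_add, smul_dotProduct,
      dotProduct_smul, smul_eq_mul, star_trivial] at h0 hsym ⊢
    rw [hsym] at h0
    nlinarith [h0]
  have := discrim_le_zero key
  simp only [discrim] at this
  nlinarith [this]

lemma eig_lower_bound {n : ℕ} [NeZero n] {P : Matrix (Fin n) (Fin n) ℝ} (hP : P.PosDef)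
    (v : Fin n → ℝ) :
    (⨅ i, hP.1.eigenvalues i) * (∑ i, v i ^ 2) ≤ v ⬝ᵥ P.mulVec v := by
  classical
  set U : Matrix (Fin n) (Fin n) ℝ :=
    (Matrix.IsHermitian.eigenvectorUnitary hP.1 : Matrix (Fin n) (Fin n) ℝ)
  set w : Fin n → ℝ := (star U).mulVec v with hw
  have hspec := hP.1.spectral_theorem
  have hUU : U * star U = 1 :=
    (Matrix.mem_unitaryGroup_iff).mp (Matrix.IsHermitian.eigenvectorUnitary hP.1).2
  have hstar : star U = Uᵀ := conjTranspose_eq_transpose_of_trivial U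
  have h1 : v ⬝ᵥ P.mulVec v = ∑ i, hP.1.eigenvalues i * w i ^ 2 := by
    conv_lhs => rw [hspec, Unitary.conjStarAlgAut_apply]
    rw [← mulVec_mulVec, ← mulVec_mulVec, dotProduct_mulVec, ← mulVec_transpose, ← hstar, ← hw]
    simp [dotProduct, mulVec_diagonal, Function.comp]
    exact Finset.sum_congr rfl fun i _ => by ring
  have h2 : ∑ i, v i ^ 2 = ∑ i, w i ^ 2 := by
    have : w ⬝ᵥ w = v ⬝ᵥ v := by
      rw [hw, hstar, mulVec_transpose, ← dotProduct_mulVec, ← mulVec_transpose,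
        mulVec_mulVec, ← hstar, hUU, one_mulVec]
    simpa [dotProduct, sq] using this.symm
  rw [h1, h2, Finset.mul_sum]
  apply Finset.sum_le_sum
  intro i _
  have h3 : (⨅ j, hP.1.eigenvalues j) ≤ hP.1.eigenvalues i :=
    ciInf_le (Finite.bddBelow_range _) i
  nlinarith [sq_nonneg (w i)]

lemma hasDerivAt_quadForm {n : ℕ} (P : Matrix (Fin n) (Fin n) ℝ)
    {f g : ℝ → Fin n → ℝ} {f' g' : Fin n → ℝ} {t : ℝ}
    (hf : HasDerivAt f f' t) (hg : HasDerivAt g g' t) :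
    HasDerivAt (fun s => f s ⬝ᵥ P.mulVec (g s))
      (f' ⬝ᵥ P.mulVec (g t) + f t ⬝ᵥ P.mulVec g') t := by
  have hfi := hasDerivAt_pi.mp hf
  have hgi := hasDerivAt_pi.mp hg
  have key : HasDerivAt (fun s => ∑ i, ∑ j, f s i * (P i j * g s j))
      (∑ i, ∑ j, (f' i * (P i j * g t j) + f t i * (P i j * g' j))) t := by
    apply HasDerivAt.fun_sum
    intro i _
    apply HasDerivAt.fun_sum
    intro j _
    exact (hfi i).mul ((hgi j).const_mul (P i j))
  have heq : (fun s => f s ⬝ᵥ P.mulVec (g s))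
      = fun s => ∑ i, ∑ j, f s i * (P i j * g s j) := by
    funext s
    simp [dotProduct, mulVec, Finset.mul_sum]
  rw [heq]
  convert key using 1
  simp [dotProduct, mulVec, Finset.mul_sum, Finset.sum_add_distrib]

/-- Limit synchronization error bound for controlled master–slave
synchronization of Lurie systems under a bounded transmission error: if the
passification relations hold and the transmission error is bounded by `Δ`, then
`limsup_{t→∞} ‖z(t) − x(t)‖ ≤ 2(|K| + L)·Δ·√(BᵀPB)/(μ·√(λ_min(P)))`,
where `‖·‖` is the Euclidean norm. -/
theorem controlled_sync_limit_error_bound {n : ℕ}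
    (A : Matrix (Fin n) (Fin n) ℝ) (B C : Fin n → ℝ)
    (φ : ℝ → ℝ) (L : ℝ) (hL : 0 ≤ L)
    (hφ : ∀ y y' : ℝ, |φ y - φ y'| ≤ L * |y - y'|)
    (P : Matrix (Fin n) (Fin n) ℝ) (μ K : ℝ)
    (hP : P.PosDef) (hμ : 0 < μ)
    (hLyap : ∀ v : Fin n → ℝ,
      v ⬝ᵥ (P * (A - K • vecMulVec B C) + (A - K • vecMulVec B C)ᵀ * P).mulVec v
        ≤ -μ * (v ⬝ᵥ P.mulVec v))
    (hPB : P.mulVec B = C)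
    (ybar : ℝ → ℝ) (Δ : ℝ) (hΔ : 0 ≤ Δ)
    (x z : ℝ → Fin n → ℝ)
    (hx : ∀ t : ℝ, HasDerivAt x (A.mulVec (x t) + φ (C ⬝ᵥ x t) • B) t)
    (hδ : ∀ t ≥ (0 : ℝ), |C ⬝ᵥ x t - ybar t| ≤ Δ)
    (hz : ∀ t : ℝ, HasDerivAt z
      (A.mulVec (z t) + φ (C ⬝ᵥ z t) • B
        + (-((K + L) * (C ⬝ᵥ z t - ybar t))) • B) t) :
    limsup (fun t => Real.sqrt (∑ i, (z t i - x t i) ^ 2)) atTop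
      ≤ 2 * (|K| + L) * Δ * Real.sqrt (B ⬝ᵥ P.mulVec B)
        / (μ * Real.sqrt (⨅ i, hP.1.eigenvalues i)) := by
  classical
  rcases Nat.eq_zero_or_pos n with hn | hn
  · subst hn
    have hfun : (fun t => Real.sqrt (∑ i : Fin 0, (z t i - x t i) ^ 2))
        = fun _ : ℝ => (0 : ℝ) := by
      funext t; simp
    have hinf : (⨅ i : Fin 0, hP.1.eigenvalues i) = 0 := Real.iInf_of_isEmpty _
    rw [hfun, hinf]
    simp [limsup_const]
  haveI : NeZero n := ⟨hn.ne'⟩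
  -- notation
  set lam : ℝ := ⨅ i, hP.1.eigenvalues i with hlam
  set c : ℝ := 2 * (|K| + L) * Δ * Real.sqrt (B ⬝ᵥ P.mulVec B) with hc
  have hlam_pos : 0 < lam := by
    obtain ⟨i, hi⟩ := exists_eq_ciInf_of_finite (f := hP.1.eigenvalues)
    rw [hlam, ← hi]
    exact hP.eigenvalues_pos i
  have hc_nonneg : 0 ≤ c := by
    have h1 : 0 ≤ |K| + L := by positivity
    have h2 : 0 ≤ Real.sqrt (B ⬝ᵥ P.mulVec B) := Real.sqrt_nonneg _
    positivity
  set e : ℝ → Fin n → ℝ := fun t => z t - x t with he_def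
  set e' : ℝ → Fin n → ℝ := fun t =>
    (A.mulVec (z t) + φ (C ⬝ᵥ z t) • B + (-((K + L) * (C ⬝ᵥ z t - ybar t))) • B)
      - (A.mulVec (x t) + φ (C ⬝ᵥ x t) • B) with he'_def
  have he : ∀ t, HasDerivAt e (e' t) t := fun t => (hz t).sub (hx t)
  set V : ℝ → ℝ := fun t => e t ⬝ᵥ P.mulVec (e t) with hV_def
  set Vd : ℝ → ℝ := fun t => e' t ⬝ᵥ P.mulVec (e t) + e t ⬝ᵥ P.mulVec (e' t) with hVd_def
  have hV : ∀ t, HasDerivAt V (Vd t) t := fun t => hasDerivAt_quadForm P (he t) (he t)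
  have hV_nonneg : ∀ t, 0 ≤ V t := by
    intro t
    have := hP.posSemidef.dotProduct_mulVec_nonneg (e t)
    simpa using this
  have hBPB : 0 ≤ B ⬝ᵥ P.mulVec B := by
    have := hP.posSemidef.dotProduct_mulVec_nonneg B
    simpa using this
  -- the key differential inequality
  have key : ∀ t ≥ (0:ℝ), Vd t ≤ -(μ/2) * V t + c^2/(2*μ) := by
    intro t ht
    set M : Matrix (Fin n) (Fin n) ℝ := A - K • vecMulVec B C with hM
    set δt : ℝ := C ⬝ᵥ x t - ybar t with hδt
    set ξ : ℝ := φ (C ⬝ᵥ z t) - φ (C ⬝ᵥ x t) - L * (C ⬝ᵥ e t) - (K + L) * δt with hξ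
    have he'_eq : e' t = M.mulVec (e t) + ξ • B := by
      have hvv : (vecMulVec B C).mulVec (e t) = (C ⬝ᵥ e t) • B := by
        funext i
        simp [mulVec, dotProduct, vecMulVec, Finset.sum_mul, Finset.mul_sum,
          mul_comm, mul_assoc, mul_left_comm]
      have h0 : e' t = A *ᵥ z t + φ (C ⬝ᵥ z t) • B
          + -((K + L) * (C ⬝ᵥ z t - ybar t)) • B - (A *ᵥ x t + φ (C ⬝ᵥ x t) • B) := rfl
      rw [h0, hM, Matrix.sub_mulVec, smul_mulVec, hvv]
      have hCe : C ⬝ᵥ z t - C ⬝ᵥ x t = C ⬝ᵥ e t := by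
        have h1 : e t = z t - x t := rfl
        rw [h1, dotProduct_sub]
      have hA : A *ᵥ e t = A *ᵥ z t - A *ᵥ x t := by
        have h1 : e t = z t - x t := rfl
        rw [h1, mulVec_sub]
      funext i
      simp only [hξ, hδt, Pi.add_apply, Pi.sub_apply, Pi.smul_apply, smul_eq_mul, hA, ← hCe]
      ring
    have hsym : e' t ⬝ᵥ P.mulVec (e t) = e t ⬝ᵥ P.mulVec (e' t) :=
      Pdot_symm hP.1 _ _
    have hξB : e t ⬝ᵥ P.mulVec (ξ • B) = ξ * (C ⬝ᵥ e t) := by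
      rw [mulVec_smul, dotProduct_smul, hPB, smul_eq_mul, dotProduct_comm]
    have hMsym : e t ⬝ᵥ ((P * M + Mᵀ * P).mulVec (e t))
        = 2 * (e t ⬝ᵥ P.mulVec (M.mulVec (e t))) := by
      rw [add_mulVec, dotProduct_add, ← mulVec_mulVec, ← mulVec_mulVec]
      have : e t ⬝ᵥ Mᵀ.mulVec (P.mulVec (e t))
          = M.mulVec (e t) ⬝ᵥ P.mulVec (e t) := by
        rw [dotProduct_mulVec, vecMul_transpose]
      rw [this, Pdot_symm hP.1]
      ring
    have hLy := hLyap (e t)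
    rw [hMsym] at hLy
    have hVd_eq : Vd t = 2 * (e t ⬝ᵥ P.mulVec (M.mulVec (e t))) + 2 * (ξ * (C ⬝ᵥ e t)) := by
      have h0 : Vd t = e' t ⬝ᵥ P.mulVec (e t) + e t ⬝ᵥ P.mulVec (e' t) := rfl
      rw [h0, hsym, he'_eq, mulVec_add, dotProduct_add, hξB]
      ring
    -- bound ξ * (C ⬝ᵥ e t)
    have hCe : C ⬝ᵥ e t = e t ⬝ᵥ P.mulVec B := by
      rw [hPB, dotProduct_comm]
    have hCS : (C ⬝ᵥ e t)^2 ≤ V t * (B ⬝ᵥ P.mulVec B) := by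
      rw [hCe, hV_def]
      exact P_cauchy_schwarz hP.posSemidef (e t) B
    have hCzx : C ⬝ᵥ z t - C ⬝ᵥ x t = C ⬝ᵥ e t := by
      rw [he_def]; simp [dotProduct_sub]
    have hφb : (φ (C ⬝ᵥ z t) - φ (C ⬝ᵥ x t)) * (C ⬝ᵥ e t) ≤ L * (C ⬝ᵥ e t)^2 := by
      have h1 := hφ (C ⬝ᵥ z t) (C ⬝ᵥ x t)
      rw [hCzx] at h1
      calc (φ (C ⬝ᵥ z t) - φ (C ⬝ᵥ x t)) * (C ⬝ᵥ e t)
          ≤ |(φ (C ⬝ᵥ z t) - φ (C ⬝ᵥ x t)) * (C ⬝ᵥ e t)| := le_abs_self _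
        _ = |φ (C ⬝ᵥ z t) - φ (C ⬝ᵥ x t)| * |C ⬝ᵥ e t| := abs_mul _ _
        _ ≤ (L * |C ⬝ᵥ e t|) * |C ⬝ᵥ e t| :=
            mul_le_mul_of_nonneg_right h1 (abs_nonneg _)
        _ = L * (C ⬝ᵥ e t)^2 := by rw [mul_assoc, ← sq_abs]; ring_nf
    have hδb : |δt| ≤ Δ := hδ t ht
    have hξbound : ξ * (C ⬝ᵥ e t) ≤ (|K| + L) * Δ * |C ⬝ᵥ e t| := by
      have h2 : -((K + L) * δt) * (C ⬝ᵥ e t) ≤ (|K| + L) * Δ * |C ⬝ᵥ e t| := by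
        calc -((K + L) * δt) * (C ⬝ᵥ e t) ≤ |(-((K + L) * δt)) * (C ⬝ᵥ e t)| := le_abs_self _
          _ = |K + L| * |δt| * |C ⬝ᵥ e t| := by rw [abs_mul, abs_neg, abs_mul]
          _ ≤ (|K| + L) * Δ * |C ⬝ᵥ e t| := by
              have hKL : |K + L| ≤ |K| + L := by
                calc |K + L| ≤ |K| + |L| := abs_add_le _ _
                  _ = |K| + L := by rw [abs_of_nonneg hL]
              have := mul_le_mul (mul_le_mul hKL hδb (abs_nonneg _) (by positivity))
                (le_refl |C ⬝ᵥ e t|) (abs_nonneg _) (by positivity)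
              linarith
      have : ξ * (C ⬝ᵥ e t) = (φ (C ⬝ᵥ z t) - φ (C ⬝ᵥ x t)) * (C ⬝ᵥ e t)
          - L * (C ⬝ᵥ e t)^2 + (-((K + L) * δt)) * (C ⬝ᵥ e t) := by
        rw [hξ]; ring
      rw [this]
      linarith
    have habsCe : |C ⬝ᵥ e t| ≤ Real.sqrt (V t) * Real.sqrt (B ⬝ᵥ P.mulVec B) := by
      rw [← Real.sqrt_mul (hV_nonneg t)]
      rw [← Real.sqrt_sq_eq_abs]
      exact Real.sqrt_le_sqrt hCS
    have hfinal : 2 * (ξ * (C ⬝ᵥ e t)) ≤ c * Real.sqrt (V t) := by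
      have h3 : ξ * (C ⬝ᵥ e t) ≤ (|K| + L) * Δ * (Real.sqrt (V t) * Real.sqrt (B ⬝ᵥ P.mulVec B)) := by
        calc ξ * (C ⬝ᵥ e t) ≤ (|K| + L) * Δ * |C ⬝ᵥ e t| := hξbound
          _ ≤ (|K| + L) * Δ * (Real.sqrt (V t) * Real.sqrt (B ⬝ᵥ P.mulVec B)) := by
              apply mul_le_mul_of_nonneg_left habsCe (by positivity)
      rw [hc]
      linarith [h3]
    have hsq : Real.sqrt (V t) ^ 2 = V t := Real.sq_sqrt (hV_nonneg t)
    have hsqnn : 0 ≤ Real.sqrt (V t) := Real.sqrt_nonneg _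
    have hdiv : (c^2/(2*μ)) * (2*μ) = c^2 := by field_simp
    have hamgm0 : ∀ v s : ℝ, s^2 = v → c * s ≤ (μ/2) * v + c^2/(2*μ) := by
      intro v s hs
      have h9 : c * s - ((μ/2) * v + c^2/(2*μ)) = -((μ * s - c)^2/(2*μ)) := by
        rw [← hs]
        field_simp
        ring
      have h10 : 0 ≤ (μ * s - c)^2/(2*μ) := by positivity
      linarith [h9, h10]
    have hamgm : c * Real.sqrt (V t) ≤ (μ/2) * V t + c^2/(2*μ) :=
      hamgm0 (V t) (Real.sqrt (V t)) hsq
    calc Vd t = 2 * (e t ⬝ᵥ P.mulVec (M.mulVec (e t))) + 2 * (ξ * (C ⬝ᵥ e t)) := hVd_eq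
      _ ≤ -μ * V t + c * Real.sqrt (V t) := by
          have hLy' : 2 * (e t ⬝ᵥ P.mulVec (M.mulVec (e t))) ≤ -μ * V t := hLy
          linarith [hfinal]
      _ ≤ -μ * V t + ((μ/2) * V t + c^2/(2*μ)) := by linarith
      _ = -(μ/2) * V t + c^2/(2*μ) := by ring
  -- Lyapunov decay via an auxiliary decreasing function
  set a : ℝ := (c/μ)^2 with ha
  have haμ : (μ/2) * a = c^2/(2*μ) := by rw [ha]; field_simp
  set g : ℝ → ℝ := fun t => (V t - a) * Real.exp (μ/2 * t) with hg_def
  have hg : ∀ t, HasDerivAt g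
      (Vd t * Real.exp (μ/2 * t) + (V t - a) * (Real.exp (μ/2 * t) * (μ/2))) t := by
    intro t
    have h1 : HasDerivAt (fun s => V s - a) (Vd t) t := (hV t).sub_const a
    have h2 : HasDerivAt (fun s : ℝ => Real.exp (μ/2 * s)) (Real.exp (μ/2 * t) * (μ/2)) t := by
      have := ((hasDerivAt_id t).const_mul (μ/2)).exp
      simpa [mul_comm] using this
    exact h1.mul h2
  have hg_cont : Continuous g := by
    apply continuous_iff_continuousAt.mpr
    intro t
    exact (hg t).continuousAt
  have hg_anti : AntitoneOn g (Set.Ici 0) := by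
    apply antitoneOn_of_deriv_nonpos (convex_Ici 0) hg_cont.continuousOn
    · intro t ht
      exact (hg t).differentiableAt.differentiableWithinAt
    intro t ht
    rw [interior_Ici] at ht
    rw [(hg t).deriv]
    have hexp : 0 < Real.exp (μ/2 * t) := Real.exp_pos _
    have hk := key t (le_of_lt ht)
    nlinarith [mul_nonneg (by linarith [haμ] : (0:ℝ) ≤ -(Vd t) - (μ/2) * V t + (μ/2) * a)
      hexp.le]
  have hVbound : ∀ t ≥ (0:ℝ), V t ≤ a + |g 0| * Real.exp (-(μ/2 * t)) := by
    intro t ht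
    have h1 : g t ≤ g 0 := hg_anti (Set.self_mem_Ici) ht ht
    have h2 : V t = a + g t * Real.exp (-(μ/2 * t)) := by
      have h0 : g t = (V t - a) * Real.exp (μ/2 * t) := rfl
      rw [h0, mul_assoc, ← Real.exp_add]
      simp
    rw [h2]
    have h3 : g t * Real.exp (-(μ/2 * t)) ≤ |g 0| * Real.exp (-(μ/2 * t)) := by
      apply mul_le_mul_of_nonneg_right _ (Real.exp_pos _).le
      exact h1.trans (le_abs_self _)
    linarith
  -- transfer to the Euclidean norm
  set h : ℝ → ℝ := fun t => Real.sqrt ((a + |g 0| * Real.exp (-(μ/2 * t))) / lam) with hh_def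
  have hub : ∀ t ≥ (0:ℝ), Real.sqrt (∑ i, (z t i - x t i) ^ 2) ≤ h t := by
    intro t ht
    have h1 : lam * (∑ i, (z t i - x t i) ^ 2) ≤ V t := by
      have h0 := eig_lower_bound hP (e t)
      rw [← hlam] at h0
      have hsum : (∑ i, (z t i - x t i) ^ 2) = ∑ i, e t i ^ 2 := by
        simp [he_def]
      rw [hsum]
      exact h0
    have h2 : (∑ i, (z t i - x t i) ^ 2) ≤ V t / lam := by
      rw [le_div_iff₀ hlam_pos]
      linarith [h1]
    have h3 : V t / lam ≤ (a + |g 0| * Real.exp (-(μ/2 * t))) / lam :=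
      (div_le_div_iff_of_pos_right hlam_pos).mpr (hVbound t ht)
    calc Real.sqrt (∑ i, (z t i - x t i) ^ 2) ≤ Real.sqrt (V t / lam) :=
          Real.sqrt_le_sqrt h2
      _ ≤ h t := Real.sqrt_le_sqrt h3
  -- limit of the bounding function
  have hcμ : 0 ≤ c / μ := div_nonneg hc_nonneg hμ.le
  have htend : Tendsto h atTop (nhds (c / (μ * Real.sqrt lam))) := by
    have h1 : Tendsto (fun t : ℝ => μ/2 * t) atTop atTop :=
      Tendsto.const_mul_atTop (by linarith) tendsto_id
    have h2 : Tendsto (fun t : ℝ => Real.exp (-(μ/2 * t))) atTop (nhds 0) :=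
      Real.tendsto_exp_neg_atTop_nhds_zero.comp h1
    have h3 : Tendsto (fun t => (a + |g 0| * Real.exp (-(μ/2 * t))) / lam) atTop
        (nhds ((a + |g 0| * 0) / lam)) :=
      (tendsto_const_nhds.add (tendsto_const_nhds.mul h2)).div_const lam
    have h4 := h3.sqrt
    convert h4 using 2
    rw [mul_zero, add_zero, ha, Real.sqrt_div (sq_nonneg _), Real.sqrt_sq hcμ, div_div]
  have hev : ∀ᶠ t in atTop, Real.sqrt (∑ i, (z t i - x t i) ^ 2) ≤ h t :=
    (eventually_ge_atTop (0:ℝ)).mono fun t ht => hub t ht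
  have hcb : IsCoboundedUnder (· ≤ ·) atTop
      (fun t => Real.sqrt (∑ i, (z t i - x t i) ^ 2)) :=
    isCoboundedUnder_le_of_eventually_le atTop
      (Eventually.of_forall fun t => Real.sqrt_nonneg _)
  have hbd : IsBoundedUnder (· ≤ ·) atTop h := htend.isBoundedUnder_le
  calc limsup (fun t => Real.sqrt (∑ i, (z t i - x t i) ^ 2)) atTop
      ≤ limsup h atTop := limsup_le_limsup hev hcb hbd
    _ = c / (μ * Real.sqrt lam) := htend.limsup_eq
end

section
/- Let A be a real n×n matrix, B a real n×1 matrix, C a real 1×n matrix, and φ : ℝ → ℝ Lipschitz continuous with constant L ≥ 0. Suppose there exist a real symmetric positive-definite n×n matrix P, μ > 0, and K ∈ ℝ such that P(A − BKC) + (A − BKC)ᵀP ≤ −μP (as quadratic forms) and PB = Cᵀ. Let x : ℝ → ℝⁿ solve ẋ = A x + B φ(C x) and let z : ℝ → ℝⁿ solve ż = A z + B φ(C z) + B u with the perfect-channel controller u(t) = −(K + L)·(C z(t) − C x(t)). Then synchronization is exponential: ‖z(t) − x(t)‖ ≤ √(λ_max(P)/λ_min(P))·‖z(0) − x(0)‖·e^{−μt/2}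 for all t ≥ 0, where λ_min(P), λ_max(P) are the smallest and largest eigenvalues of P. -/
open Matrix

lemma aux_vecMulVec_mulVec {n : ℕ} (B C e : Fin n → ℝ) :
    (vecMulVec B C).mulVec e = (C ⬝ᵥ e) • B := by
  funext i
  simp only [vecMulVec_apply, Matrix.mulVec, dotProduct, Pi.smul_apply, smul_eq_mul,
    Finset.mul_sum, Finset.sum_mul]
  exact Finset.sum_congr rfl fun j _ => by ring

lemma aux_exists_w {n : ℕ} {P : Matrix (Fin n) (Fin n) ℝ} (hP : P.IsHermitian)
    (v : Fin n → ℝ) :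
    ∃ w : Fin n → ℝ, v ⬝ᵥ P.mulVec v = ∑ i, hP.eigenvalues i * w i ^ 2 ∧
      v ⬝ᵥ v = ∑ i, w i ^ 2 := by
  classical
  set U : Matrix (Fin n) (Fin n) ℝ := (hP.eigenvectorUnitary : Matrix (Fin n) (Fin n) ℝ) with hU
  have hUU : U * star U = 1 := (Matrix.mem_unitaryGroup_iff).mp hP.eigenvectorUnitary.2
  have hstar : star U = Uᵀ := by simp [star, conjTranspose]
  set D : Matrix (Fin n) (Fin n) ℝ := diagonal (RCLike.ofReal ∘ hP.eigenvalues) with hD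
  set w : Fin n → ℝ := Uᵀ.mulVec v with hw
  have hdot : ∀ y : Fin n → ℝ, v ⬝ᵥ U *ᵥ y = w ⬝ᵥ y := by
    intro y
    rw [dotProduct_mulVec, hw, mulVec_transpose]
  refine ⟨w, ?_, ?_⟩
  · have h1 : P *ᵥ v = U *ᵥ (D *ᵥ w) := by
      conv_lhs => rw [hP.spectral_theorem, Unitary.conjStarAlgAut_apply]
      rw [← hU, ← hD, hstar, ← mulVec_mulVec, ← mulVec_mulVec, ← hw]
    rw [h1, hdot]
    have hdiag : D *ᵥ w = fun i => hP.eigenvalues i * w i := by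
      funext i
      simp [hD, mulVec_diagonal, RCLike.ofReal]
    rw [hdiag, dotProduct]
    exact Finset.sum_congr rfl fun i _ => by ring
  · have h2 : v ⬝ᵥ v = v ⬝ᵥ U *ᵥ (Uᵀ *ᵥ v) := by
      rw [mulVec_mulVec, ← hstar, hUU, one_mulVec]
    rw [h2, hdot, ← hw, dotProduct]
    exact Finset.sum_congr rfl fun i _ => by ring

lemma aux_hasDerivAt_quad {n : ℕ} (P : Matrix (Fin n) (Fin n) ℝ)
    (e : ℝ → Fin n → ℝ) (d : Fin n → ℝ) (t : ℝ)
    (he : HasDerivAt e d t) :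
    HasDerivAt (fun s => e s ⬝ᵥ P.mulVec (e s))
      (d ⬝ᵥ P.mulVec (e t) + e t ⬝ᵥ P.mulVec d) t := by
  have hc : ∀ i, HasDerivAt (fun s => e s i) (d i) t := fun i => hasDerivAt_pi.mp he i
  have h : HasDerivAt (fun s => ∑ i, e s i * ∑ j, P i j * e s j)
      (∑ i, (d i * ∑ j, P i j * e t j + e t i * ∑ j, P i j * d j)) t := by
    refine HasDerivAt.fun_sum fun i _ => ?_
    exact (hc i).mul (HasDerivAt.fun_sum fun j _ => (hc j).const_mul (P i j))
  have heq : (fun s => ∑ i, e s i * ∑ j, P i j * e s j)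
      = fun s => e s ⬝ᵥ P.mulVec (e s) := by
    funext s; simp [dotProduct, Matrix.mulVec]
  rw [heq] at h
  convert h using 1
  rw [Finset.sum_add_distrib]
  simp [dotProduct, Matrix.mulVec]

lemma aux_gronwall {V Vd : ℝ → ℝ} {μ : ℝ}
    (hV : ∀ t, HasDerivAt V (Vd t) t) (h : ∀ t, Vd t ≤ -μ * V t) :
    ∀ t ≥ (0 : ℝ), V t ≤ V 0 * Real.exp (-μ * t) := by
  have hg : ∀ s : ℝ, HasDerivAt (fun u => V u * Real.exp (μ * u))
      (Vd s * Real.exp (μ * s) + V s * (Real.exp (μ * s) * (μ * 1))) s := by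
    intro s
    exact (hV s).mul (((hasDerivAt_id s).const_mul μ).exp)
  have hmono : Antitone (fun u => V u * Real.exp (μ * u)) := by
    apply antitone_of_deriv_nonpos
    · exact fun s => (hg s).differentiableAt
    · intro s
      rw [(hg s).deriv]
      nlinarith [mul_le_mul_of_nonneg_right (h s) (Real.exp_pos (μ * s)).le,
        Real.exp_pos (μ * s)]
  intro t ht
  have h0 : V t * Real.exp (μ * t) ≤ V 0 * Real.exp (μ * 0) := hmono ht
  rw [mul_zero, Real.exp_zero, mul_one] at h0
  have hEpos : (0 : ℝ) < Real.exp (μ * t) := Real.exp_pos _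
  have : -μ * t = -(μ * t) := by ring
  rw [this, Real.exp_neg, ← div_eq_mul_inv, le_div_iff₀ hEpos]
  exact h0

/-- Exponential synchronization over a perfect channel: under the passification
relations `P(A−BKC) + (A−BKC)ᵀP ≤ −μP`, `PB = Cᵀ`, the controller
`u = −(K+L)(Cz − Cx)` yields
`‖z(t) − x(t)‖ ≤ √(λ_max(P)/λ_min(P))·‖z(0) − x(0)‖·e^{−μt/2}`,
with `‖·‖` the Euclidean norm. -/
theorem perfect_channel_exponential_sync {n : ℕ}
    (A : Matrix (Fin n) (Fin n) ℝ) (B C : Fin n → ℝ)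
    (φ : ℝ → ℝ) (L : ℝ) (hL : 0 ≤ L)
    (hφ : ∀ y y' : ℝ, |φ y - φ y'| ≤ L * |y - y'|)
    (P : Matrix (Fin n) (Fin n) ℝ) (μ K : ℝ)
    (hP : P.PosDef) (hμ : 0 < μ)
    (hLyap : ∀ v : Fin n → ℝ,
      v ⬝ᵥ (P * (A - K • vecMulVec B C) + (A - K • vecMulVec B C)ᵀ * P).mulVec v
        ≤ -μ * (v ⬝ᵥ P.mulVec v))
    (hPB : P.mulVec B = C)
    (x z : ℝ → Fin n → ℝ)
    (hx : ∀ t : ℝ, HasDerivAt x (A.mulVec (x t) + φ (C ⬝ᵥ x t) • B) t)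
    (hz : ∀ t : ℝ, HasDerivAt z
      (A.mulVec (z t) + φ (C ⬝ᵥ z t) • B
        + (-((K + L) * (C ⬝ᵥ z t - C ⬝ᵥ x t))) • B) t) :
    ∀ t ≥ (0 : ℝ), Real.sqrt (∑ i, (z t i - x t i) ^ 2)
      ≤ Real.sqrt ((⨆ i, hP.1.eigenvalues i) / (⨅ i, hP.1.eigenvalues i))
          * Real.sqrt (∑ i, (z 0 i - x 0 i) ^ 2) * Real.exp (-μ * t / 2) := by
  classical
  rcases Nat.eq_zero_or_pos n with hn | hn
  · subst hn
    intro t ht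
    simp
  haveI : Nonempty (Fin n) := ⟨⟨0, hn⟩⟩
  -- the error signal and its derivative
  set e : ℝ → Fin n → ℝ := fun s => z s - x s with he_def
  set c : ℝ → ℝ :=
    fun s => (φ (C ⬝ᵥ z s) - φ (C ⬝ᵥ x s)) - (K + L) * (C ⬝ᵥ e s) with hc_def
  have hCe : ∀ s, C ⬝ᵥ e s = C ⬝ᵥ z s - C ⬝ᵥ x s := by
    intro s
    simp [he_def, dotProduct, mul_sub, Finset.sum_sub_distrib]
  have hE : ∀ t, HasDerivAt e (A.mulVec (e t) + c t • B) t := by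
    intro t
    have h := (hz t).sub (hx t)
    refine HasDerivAt.congr_deriv h ?_
    funext i
    simp only [hc_def, he_def, Matrix.mulVec_sub, hCe, dotProduct_sub, Pi.add_apply, Pi.sub_apply,
      Pi.smul_apply, smul_eq_mul]
    ring
  -- the Lyapunov function and its derivative bound
  set V : ℝ → ℝ := fun s => e s ⬝ᵥ P.mulVec (e s) with hV_def
  set Vd : ℝ → ℝ := fun s =>
    (A.mulVec (e s) + c s • B) ⬝ᵥ P.mulVec (e s)
      + e s ⬝ᵥ P.mulVec (A.mulVec (e s) + c s • B) with hVd_def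
  have hV : ∀ t, HasDerivAt V (Vd t) t := fun t =>
    aux_hasDerivAt_quad P e (A.mulVec (e t) + c t • B) t (hE t)
  have hPt : Pᵀ = P := by
    funext i j
    have h2 := congrFun (congrFun hP.1 i) j
    simp only [conjTranspose_apply, star, id] at h2
    simpa using h2
  have hVle : ∀ t, Vd t ≤ -μ * V t := by
    intro t
    set v : Fin n → ℝ := e t with hv_def
    set y : ℝ := C ⬝ᵥ v with hy_def
    set Δ : ℝ := φ (C ⬝ᵥ z t) - φ (C ⬝ᵥ x t) with hΔ_def
    have hct : c t = Δ - (K + L) * y := rfl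
    have hBPv : B ⬝ᵥ P.mulVec v = y := by
      rw [dotProduct_mulVec, ← mulVec_transpose, hPt, hPB]
    have hvC : v ⬝ᵥ C = y := by rw [dotProduct_comm, ← hy_def]
    have hVd_eq : Vd t = ((A *ᵥ v) ⬝ᵥ P *ᵥ v + v ⬝ᵥ P *ᵥ (A *ᵥ v)) + 2 * c t * y := by
      show (A *ᵥ v + c t • B) ⬝ᵥ P *ᵥ v + v ⬝ᵥ P *ᵥ (A *ᵥ v + c t • B) = _
      rw [add_dotProduct, smul_dotProduct, mulVec_add, mulVec_smul, hPB, dotProduct_add,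
        dotProduct_smul, hBPv, hvC]
      simp only [smul_eq_mul]
      ring
    have hM : (A - K • vecMulVec B C) *ᵥ v = A *ᵥ v - (K * y) • B := by
      rw [sub_mulVec, smul_mulVec, aux_vecMulVec_mulVec, smul_smul, ← hy_def]
    have hLy := hLyap v
    have hterm1 : v ⬝ᵥ (P * (A - K • vecMulVec B C)).mulVec v
        = v ⬝ᵥ P *ᵥ (A *ᵥ v) - (K * y) * y := by
      rw [← mulVec_mulVec, hM, mulVec_sub, mulVec_smul, hPB, dotProduct_sub,
        dotProduct_smul, hvC]
      simp only [smul_eq_mul]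
    have hterm2 : v ⬝ᵥ ((A - K • vecMulVec B C)ᵀ * P).mulVec v
        = (A *ᵥ v) ⬝ᵥ P *ᵥ v - (K * y) * y := by
      rw [← mulVec_mulVec, dotProduct_mulVec, vecMul_transpose, hM, sub_dotProduct,
        smul_dotProduct, hBPv]
      simp only [smul_eq_mul]
    have hexp : v ⬝ᵥ (P * (A - K • vecMulVec B C) + (A - K • vecMulVec B C)ᵀ * P).mulVec v
        = ((A *ᵥ v) ⬝ᵥ P *ᵥ v + v ⬝ᵥ P *ᵥ (A *ᵥ v)) - 2 * K * (y * y) := by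
      rw [add_mulVec, dotProduct_add, hterm1, hterm2]
      ring
    rw [hexp] at hLy
    have hCez : C ⬝ᵥ z t - C ⬝ᵥ x t = y := by rw [← hCe t, hy_def]
    have hΔy : Δ * y ≤ L * (y * y) := by
      have h1 := hφ (C ⬝ᵥ z t) (C ⬝ᵥ x t)
      rw [hCez] at h1
      calc Δ * y ≤ |Δ * y| := le_abs_self _
        _ = |Δ| * |y| := abs_mul _ _
        _ ≤ (L * |y|) * |y| := mul_le_mul_of_nonneg_right h1 (abs_nonneg _)
        _ = L * (y * y) := by rw [mul_assoc, abs_mul_abs_self]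
    have hVt : V t = v ⬝ᵥ P.mulVec v := rfl
    rw [hVd_eq, hct, hVt]
    nlinarith [hLy, hΔy]
  have hgr := aux_gronwall hV hVle
  -- Rayleigh quotient bounds
  set lmin : ℝ := ⨅ i, hP.1.eigenvalues i with hlmin_def
  set lmax : ℝ := ⨆ i, hP.1.eigenvalues i with hlmax_def
  have hminpos : 0 < lmin := by
    obtain ⟨j, hj⟩ := Finite.exists_min hP.1.eigenvalues
    exact lt_of_lt_of_le (hP.eigenvalues_pos j) (le_ciInf hj)
  have hlow : ∀ s, lmin * (e s ⬝ᵥ e s) ≤ V s := by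
    intro s
    obtain ⟨w, hw1, hw2⟩ := aux_exists_w hP.1 (e s)
    rw [hV_def]
    simp only
    rw [hw1, hw2, Finset.mul_sum]
    exact Finset.sum_le_sum fun i _ =>
      mul_le_mul_of_nonneg_right (ciInf_le (Finite.bddBelow_range _) i) (sq_nonneg _)
  have hhigh : V 0 ≤ lmax * (e 0 ⬝ᵥ e 0) := by
    obtain ⟨w, hw1, hw2⟩ := aux_exists_w hP.1 (e 0)
    rw [hV_def]
    simp only
    rw [hw1, hw2, Finset.mul_sum]
    exact Finset.sum_le_sum fun i _ =>
      mul_le_mul_of_nonneg_right (le_ciSup (Finite.bddAbove_range _) i) (sq_nonneg _)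
  have hmaxnn : 0 ≤ lmax := by
    obtain ⟨i⟩ := (inferInstance : Nonempty (Fin n))
    exact le_trans (hP.eigenvalues_pos i).le (le_ciSup (Finite.bddAbove_range _) i)
  have hNsum : ∀ s, e s ⬝ᵥ e s = ∑ i, (z s i - x s i) ^ 2 := by
    intro s
    simp [he_def, dotProduct, pow_two]
  intro t ht
  have hEpos : (0 : ℝ) < Real.exp (-μ * t) := Real.exp_pos _
  have hN0 : (0 : ℝ) ≤ e 0 ⬝ᵥ e 0 := by
    rw [hNsum 0]; positivity
  have hchain : lmin * (e t ⬝ᵥ e t) ≤ lmax * (e 0 ⬝ᵥ e 0) * Real.exp (-μ * t) :=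
    calc lmin * (e t ⬝ᵥ e t) ≤ V t := hlow t
      _ ≤ V 0 * Real.exp (-μ * t) := hgr t ht
      _ ≤ lmax * (e 0 ⬝ᵥ e 0) * Real.exp (-μ * t) :=
          mul_le_mul_of_nonneg_right hhigh hEpos.le
  have hkey : e t ⬝ᵥ e t ≤ (lmax / lmin) * ((e 0 ⬝ᵥ e 0) * Real.exp (-μ * t)) := by
    rw [div_mul_eq_mul_div, le_div_iff₀ hminpos]
    nlinarith [hchain]
  have hfin : Real.sqrt (e t ⬝ᵥ e t)
      ≤ Real.sqrt (lmax / lmin) * Real.sqrt (e 0 ⬝ᵥ e 0) * Real.exp (-μ * t / 2) :=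
    calc Real.sqrt (e t ⬝ᵥ e t)
        ≤ Real.sqrt ((lmax / lmin) * ((e 0 ⬝ᵥ e 0) * Real.exp (-μ * t))) :=
          Real.sqrt_le_sqrt hkey
      _ = Real.sqrt (lmax / lmin) * (Real.sqrt (e 0 ⬝ᵥ e 0) * Real.sqrt (Real.exp (-μ * t))) := by
          rw [Real.sqrt_mul (div_nonneg hmaxnn hminpos.le), Real.sqrt_mul hN0]
      _ = Real.sqrt (lmax / lmin) * Real.sqrt (e 0 ⬝ᵥ e 0) * Real.exp (-μ * t / 2) := by
          rw [← Real.exp_half]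
          ring
  rw [hNsum t, hNsum 0] at hfin
  exact hfin
end

section
/- Let A be a real n×n matrix, B a real n×1 matrix, C a real 1×n matrix, K ∈ ℝ, and set A_K := A − B K C. Suppose P is a real symmetric positive-definite n×n matrix such that P A_K + A_Kᵀ P is negative definite and P B = Cᵀ. Then for every e ∈ ℝⁿ with e ≠ 0 and every ξ ∈ ℝ with ξ·(C e) ≤ 0, one has 2 eᵀ P (A_K e + B ξ) < 0; that is, the quadratic Lyapunov function V(e) = eᵀ P e has strictly negative derivative along all directions A_K e + B ξ produced by sector-bounded feedback nonlinearities. -/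
open Matrix

/-- Sufficiency: if `P > 0`, `P A_K + A_Kᵀ P` is negative definite and
`PB = Cᵀ`, then the quadratic Lyapunov function `V(e) = eᵀPe` has strictly
negative derivative `2eᵀP(A_K e + Bξ)` for every `e ≠ 0` and every
sector-bounded input `ξ` with `ξ·(Ce) ≤ 0`. -/
theorem quadratic_lyapunov_sector_sufficiency {n : ℕ}
    (A : Matrix (Fin n) (Fin n) ℝ) (B C : Fin n → ℝ) (K : ℝ)
    (P : Matrix (Fin n) (Fin n) ℝ) (hP : P.PosDef)
    (hNeg : ∀ e : Fin n → ℝ, e ≠ 0 →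
      e ⬝ᵥ (P * (A - K • vecMulVec B C) + (A - K • vecMulVec B C)ᵀ * P).mulVec e < 0)
    (hPB : P.mulVec B = C) :
    ∀ e : Fin n → ℝ, e ≠ 0 → ∀ ξ : ℝ, ξ * (C ⬝ᵥ e) ≤ 0 →
      2 * (e ⬝ᵥ P.mulVec ((A - K • vecMulVec B C).mulVec e + ξ • B)) < 0 := by
  intro e he ξ hξ
  set M := A - K • vecMulVec B C with hM
  have hPsymm : Pᵀ = P := hP.1.eq
  have h1 := hNeg e he
  -- rewrite the quadratic form
  have key : e ⬝ᵥ (P * M + Mᵀ * P).mulVec e = 2 * (e ⬝ᵥ P.mulVec (M.mulVec e)) := by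
    rw [add_mulVec, dotProduct_add, ← mulVec_mulVec, ← mulVec_mulVec]
    have h2 : e ⬝ᵥ Mᵀ.mulVec (P.mulVec e) = e ⬝ᵥ P.mulVec (M.mulVec e) := by
      rw [dotProduct_mulVec, vecMul_transpose, dotProduct_mulVec e P,
        ← mulVec_transpose, hPsymm, dotProduct_comm]
    rw [h2]; ring
  have h3 : e ⬝ᵥ P.mulVec (ξ • B) = ξ * (C ⬝ᵥ e) := by
    rw [mulVec_smul, dotProduct_smul, hPB, smul_eq_mul, dotProduct_comm]
  calc 2 * (e ⬝ᵥ P.mulVec (M.mulVec e + ξ • B))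
      = 2 * (e ⬝ᵥ P.mulVec (M.mulVec e)) + 2 * (ξ * (C ⬝ᵥ e)) := by
        rw [mulVec_add, dotProduct_add, h3]; ring
    _ < 0 := by
        rw [← key]
        nlinarith [h1, hξ]
end

section
/- Let A be a real n×n matrix, B a real n×1 matrix, C a nonzero real 1×n matrix, K ∈ ℝ, and set A_K := A − B K C. Suppose P is a real symmetric positive-definite n×n matrix such that 2 eᵀ P (A_K e + B ξ) < 0 for every e ∈ ℝⁿ with e ≠ 0 and every ξ ∈ ℝ with ξ·(C e) ≤ 0. Then P A_K + A_Kᵀ P is negative definite, and there exists a scalar τ ≥ 0 such that P B = τ·Cᵀ. -/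
open Matrix

/-- Necessity: if the quadratic form `V(e) = eᵀPe` with `P > 0` has strictly
negative derivative `2eᵀP(A_K e + Bξ) < 0` for every `e ≠ 0` and every
sector-bounded `ξ` with `ξ·(Ce) ≤ 0` (with `C ≠ 0`), then `P A_K + A_Kᵀ P` is
negative definite and `PB = τ·Cᵀ` for some `τ ≥ 0`. -/
theorem quadratic_lyapunov_sector_necessity {n : ℕ}
    (A : Matrix (Fin n) (Fin n) ℝ) (B C : Fin n → ℝ) (K : ℝ)
    (hC : C ≠ 0)
    (P : Matrix (Fin n) (Fin n) ℝ) (hP : P.PosDef)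
    (hV : ∀ e : Fin n → ℝ, e ≠ 0 → ∀ ξ : ℝ, ξ * (C ⬝ᵥ e) ≤ 0 →
      2 * (e ⬝ᵥ P.mulVec ((A - K • vecMulVec B C).mulVec e + ξ • B)) < 0) :
    (∀ e : Fin n → ℝ, e ≠ 0 →
      e ⬝ᵥ (P * (A - K • vecMulVec B C) + (A - K • vecMulVec B C)ᵀ * P).mulVec e < 0)
    ∧ ∃ τ : ℝ, 0 ≤ τ ∧ P.mulVec B = τ • C := by
  set AK := A - K • vecMulVec B C with hAK
  have hPsym : Pᵀ = P := by
    have := hP.1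
    rwa [Matrix.IsHermitian, conjTranspose_eq_transpose_of_trivial] at this
  have hPdot : ∀ u v : Fin n → ℝ, u ⬝ᵥ P.mulVec v = P.mulVec u ⬝ᵥ v := by
    intro u v
    rw [dotProduct_mulVec, ← mulVec_transpose, hPsym]
  -- expanded form of hV
  have hV' : ∀ e : Fin n → ℝ, e ≠ 0 → ∀ ξ : ℝ, ξ * (C ⬝ᵥ e) ≤ 0 →
      2 * (e ⬝ᵥ P.mulVec (AK.mulVec e) + ξ * (e ⬝ᵥ P.mulVec B)) < 0 := by
    intro e he ξ hξ
    have := hV e he ξ hξ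
    rwa [mulVec_add, mulVec_smul, dotProduct_add, dotProduct_smul, smul_eq_mul] at this
  constructor
  · intro e he
    have h0 := hV' e he 0 (by simp)
    simp only [zero_mul, add_zero] at h0
    have expand : e ⬝ᵥ (P * AK + AKᵀ * P).mulVec e
        = 2 * (e ⬝ᵥ P.mulVec (AK.mulVec e)) := by
      rw [add_mulVec, dotProduct_add, ← mulVec_mulVec, ← mulVec_mulVec]
      have h1 : e ⬝ᵥ AKᵀ.mulVec (P.mulVec e) = P.mulVec e ⬝ᵥ AK.mulVec e := by
        rw [dotProduct_mulVec, vecMul_transpose, dotProduct_comm]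
      rw [h1, ← hPdot]
      ring
    rw [expand]
    exact h0
  · set v := P.mulVec B with hv
    have key : ∀ e : Fin n → ℝ, C ⬝ᵥ e = 0 → e ⬝ᵥ v = 0 := by
      intro e hce
      by_cases h : e = 0
      · simp [h]
      · by_contra ht
        set a := e ⬝ᵥ P.mulVec (AK.mulVec e) with ha
        set t := e ⬝ᵥ v with hts
        have := hV' e h ((|a| + 1 - a) / t) (by rw [hce, mul_zero])
        rw [div_mul_cancel₀ _ ht, ← ha] at this
        have habs : 0 ≤ |a| := abs_nonneg a
        linarith
    have hCC : (0:ℝ) < C ⬝ᵥ C := by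
      have h1 : (0:ℝ) ≤ C ⬝ᵥ C := by
        simp only [dotProduct]
        exact Finset.sum_nonneg fun i _ => mul_self_nonneg _
      refine h1.lt_of_ne fun h => hC (dotProduct_self_eq_zero.mp h.symm)
    set s := (v ⬝ᵥ C) / (C ⬝ᵥ C) with hs
    set w := v - s • C with hw
    have hCw : C ⬝ᵥ w = 0 := by
      rw [hw, dotProduct_sub, dotProduct_smul, smul_eq_mul, dotProduct_comm C v, hs,
        div_mul_cancel₀ _ hCC.ne', sub_self]
    have hwv : w ⬝ᵥ v = 0 := key w hCw
    have hww : w ⬝ᵥ w = 0 := by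
      have h2 : w ⬝ᵥ (s • C) = 0 := by
        rw [dotProduct_smul, smul_eq_mul, dotProduct_comm, hCw, mul_zero]
      have h3 : w ⬝ᵥ w = w ⬝ᵥ v - w ⬝ᵥ (s • C) := by
        rw [← dotProduct_sub, ← hw]
      rw [h3, hwv, h2, sub_zero]
    have hw0 : w = 0 := dotProduct_self_eq_zero.mp hww
    have hvsC : v = s • C := by
      have := sub_eq_zero.mp (hw ▸ hw0)
      exact this
    refine ⟨s, ?_, hvsC⟩
    by_contra hsneg
    push_neg at hsneg
    set a := C ⬝ᵥ P.mulVec (AK.mulVec C) with ha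
    have htval : C ⬝ᵥ v = s * (C ⬝ᵥ C) := by
      rw [hvsC, dotProduct_smul, smul_eq_mul]
    have htneg : C ⬝ᵥ v < 0 := by
      rw [htval]; exact mul_neg_of_neg_of_pos hsneg hCC
    have hξneg : (|a| + 1 - a) / (C ⬝ᵥ v) < 0 := by
      apply div_neg_of_pos_of_neg _ htneg
      have := le_abs_self a; linarith
    have hcond : ((|a| + 1 - a) / (C ⬝ᵥ v)) * (C ⬝ᵥ C) ≤ 0 :=
      le_of_lt (mul_neg_of_neg_of_pos hξneg hCC)
    have := hV' C hC _ hcond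
    rw [div_mul_cancel₀ _ htneg.ne, ← ha] at this
    have habs : 0 ≤ |a| := abs_nonneg a
    linarith
end
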